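/- Fix Δ ∈ (0,1) and let x = 1−Δ. Let P be any probability distribution on a finite vocabulary with max_w P_w ≤ 1−Δ, and F_{1,P}(r) = Σ_w P_w r^{1/P_w}. Then x^{Δ/(1−Δ)} + x^{(1−Δ)/Δ} ≤ (1 − F_{1,P}(x))/(1 − x) ≤ |supp(P)|, where supp(P) = {w : P_w ≠ 0}; moreover as Δ → 0 the lower bound tends to 1 + e^{−1}. -/

import Mathlib

open Real Set Finset Filter Topology


/-- `p ↦ p * x ^ (1/p)` is convex on `[0, ∞)` for `0 < x ≤ 1`
(with junk value `0 * x ^ (1/0) = 0` at `0`). -/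
lemma psi_convex {x : ℝ} (hx : 0 < x) (hx1 : x ≤ 1) :
    ConvexOn ℝ (Set.Ici (0:ℝ)) (fun p : ℝ => p * x ^ (1/p)) := by
  have key : ∀ a b : ℝ, 0 < a → 0 < b → ∀ l m : ℝ, 0 < l → 0 < m → l + m = 1 →
      (l*a + m*b) * x ^ (1/(l*a + m*b)) ≤ l * (a * x ^ (1/a)) + m * (b * x ^ (1/b)) := by
    intro a b ha hb l m hl hm hlm
    set p := l*a + m*b with hp
    have hppos : 0 < p := by positivity
    have w1 : (0:ℝ) ≤ l*a/p := by positivity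
    have w2 : (0:ℝ) ≤ m*b/p := by positivity
    have hw : l*a/p + m*b/p = 1 := by field_simp; exact hp.symm
    have hexp := convexOn_exp.2 (mem_univ ((Real.log x)/a)) (mem_univ ((Real.log x)/b)) w1 w2 hw
    have harg : (l*a/p) • (Real.log x / a) + (m*b/p) • (Real.log x / b) = Real.log x / p := by
      rw [smul_eq_mul, smul_eq_mul]
      have : (l*a/p) * (Real.log x / a) + (m*b/p) * (Real.log x / b)
          = (l + m) * Real.log x / p := by field_simp
      rw [this, hlm, one_mul]
    rw [harg] at hexp
    have e1 : x ^ (1/p) = Real.exp (Real.log x / p) := by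
      rw [Real.rpow_def_of_pos hx]; ring_nf
    have e2 : x ^ (1/a) = Real.exp (Real.log x / a) := by
      rw [Real.rpow_def_of_pos hx]; ring_nf
    have e3 : x ^ (1/b) = Real.exp (Real.log x / b) := by
      rw [Real.rpow_def_of_pos hx]; ring_nf
    rw [e1, e2, e3]
    calc p * Real.exp (Real.log x / p)
        ≤ p * ((l*a/p) • Real.exp (Real.log x / a) + (m*b/p) • Real.exp (Real.log x / b)) := by
          apply mul_le_mul_of_nonneg_left hexp hppos.le
      _ = l * (a * Real.exp (Real.log x / a)) + m * (b * Real.exp (Real.log x / b)) := by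
          have hp0 : p ≠ 0 := hppos.ne'
          rw [smul_eq_mul, smul_eq_mul]; field_simp
  have star : ∀ b t : ℝ, 0 < b → 0 ≤ t → t ≤ 1 → (t*b) * x ^ (1/(t*b)) ≤ t * (b * x ^ (1/b)) := by
    intro b t hb ht ht1
    rcases eq_or_lt_of_le ht with h|h
    · simp [← h]
    · have htb : 0 < t*b := by positivity
      have : x ^ (1/(t*b)) ≤ x ^ (1/b) := by
        apply Real.rpow_le_rpow_of_exponent_ge hx hx1
        rw [div_le_div_iff₀ hb htb]
        nlinarith
      nlinarith [Real.rpow_nonneg hx.le (1/(t*b))]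
  constructor
  · exact convex_Ici 0
  · rintro a (ha : (0:ℝ) ≤ a) b (hb : (0:ℝ) ≤ b) l m hl hm hlm
    simp only [smul_eq_mul]
    rcases eq_or_lt_of_le ha with ha0|ha0
    · rw [← ha0]
      simp only [mul_zero, zero_add, zero_mul]
      rcases eq_or_lt_of_le hb with hb0|hb0
      · rw [← hb0]; simp
      · exact star b m hb0 hm (by linarith)
    · rcases eq_or_lt_of_le hb with hb0|hb0
      · rw [← hb0]
        simp only [mul_zero, add_zero, zero_mul]
        exact star a l ha0 hl (by linarith)
      · rcases eq_or_lt_of_le hl with hl0|hl0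
        · have hm1 : m = 1 := by linarith
          simp [← hl0, hm1]
        · rcases eq_or_lt_of_le hm with hm0|hm0
          · have hl1 : l = 1 := by linarith
            simp [← hm0, hl1]
          · exact key a b ha0 hb0 l m hl0 hm0 hlm


section auxconv
variable {f : ℝ → ℝ}

lemma superadd_pair (hconv : ConvexOn ℝ (Set.Ici (0:ℝ)) f) (hf0 : f 0 = 0)
    {a b : ℝ} (ha : 0 ≤ a) (hb : 0 ≤ b) : f a + f b ≤ f (a + b) := by
  rcases eq_or_lt_of_le ha with h|h
  · simp [← h, hf0]
  rcases eq_or_lt_of_le hb with h'|h'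
  · simp [← h', hf0]
  have hab : 0 < a + b := by linarith
  have h1 : f a ≤ (a/(a+b)) * f (a+b) := by
    have := hconv.2 (Set.mem_Ici.2 (le_refl (0:ℝ))) (Set.mem_Ici.2 hab.le)
      (by positivity : (0:ℝ) ≤ b/(a+b)) (by positivity : (0:ℝ) ≤ a/(a+b))
      (by rw [← add_div, div_eq_one_iff_eq hab.ne']; ring)
    simp only [smul_eq_mul, mul_zero, zero_add, hf0] at this
    have harg : a/(a+b) * (a+b) = a := by field_simp
    rw [harg] at this
    linarith [this]
  have h2 : f b ≤ (b/(a+b)) * f (a+b) := by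
    have := hconv.2 (Set.mem_Ici.2 (le_refl (0:ℝ))) (Set.mem_Ici.2 hab.le)
      (by positivity : (0:ℝ) ≤ a/(a+b)) (by positivity : (0:ℝ) ≤ b/(a+b))
      (by rw [← add_div, div_self hab.ne'])
    simp only [smul_eq_mul, mul_zero, zero_add, hf0] at this
    have harg : b/(a+b) * (a+b) = b := by field_simp
    rw [harg] at this
    linarith [this]
  have : a/(a+b) * f (a+b) + b/(a+b) * f (a+b) = f (a+b) := by
    rw [← add_mul, ← add_div, div_self hab.ne', one_mul]
  linarith

lemma superadd_sum (hconv : ConvexOn ℝ (Set.Ici (0:ℝ)) f) (hf0 : f 0 = 0)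
    {W : Type*} (S : Finset W) (p : W → ℝ) (hp : ∀ w ∈ S, 0 ≤ p w) :
    ∑ w ∈ S, f (p w) ≤ f (∑ w ∈ S, p w) := by
  classical
  induction S using Finset.induction with
  | empty => simp [hf0]
  | @insert w0 T hw ih =>
    rw [Finset.sum_insert hw, Finset.sum_insert hw]
    have h1 : ∑ w ∈ T, f (p w) ≤ f (∑ w ∈ T, p w) :=
      ih (fun w hwT => hp w (Finset.mem_insert_of_mem hwT))
    have h2 : f (p w0) + f (∑ w ∈ T, p w) ≤ f (p w0 + ∑ w ∈ T, p w) :=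
      superadd_pair hconv hf0 (hp w0 (Finset.mem_insert_self _ _))
        (Finset.sum_nonneg (fun w hwT => hp w (Finset.mem_insert_of_mem hwT)))
    linarith

lemma spread_pair (hconv : ConvexOn ℝ (Set.Ici (0:ℝ)) f)
    {a b c d : ℝ} (hc : 0 ≤ c) (hca : c ≤ a) (had : a ≤ d) (hcb : c ≤ b) (hbd : b ≤ d)
    (hsum : a + b = c + d) : f a + f b ≤ f c + f d := by
  rcases eq_or_lt_of_le (hca.trans had) with h|h
  · have h1 : a = c := le_antisymm (by linarith) hca
    have h2 : b = c := le_antisymm (by linarith) hcb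
    rw [h1, h2, ← h]
  · have hdc : 0 < d - c := by linarith
    have key : ∀ y : ℝ, c ≤ y → y ≤ d → f y ≤ ((d - y)/(d - c)) * f c + ((y - c)/(d - c)) * f d := by
      intro y hy1 hy2
      have := hconv.2 (Set.mem_Ici.2 hc) (Set.mem_Ici.2 (show (0:ℝ) ≤ d by linarith))
        (show (0:ℝ) ≤ (d - y)/(d - c) by apply div_nonneg <;> linarith)
        (show (0:ℝ) ≤ (y - c)/(d - c) by apply div_nonneg <;> linarith)
        (by rw [← add_div, div_eq_one_iff_eq hdc.ne']; ring)
      have harg : ((d - y)/(d - c)) • c + ((y - c)/(d - c)) • d = y := by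
        simp only [smul_eq_mul]; field_simp; ring
      rw [harg] at this
      simpa [smul_eq_mul] using this
    have ka := key a hca had
    have kb := key b hcb hbd
    have hw : (d - a)/(d - c) + (d - b)/(d - c) = 1 := by
      rw [← add_div, div_eq_one_iff_eq hdc.ne']; linarith
    have hw2 : (a - c)/(d - c) + (b - c)/(d - c) = 1 := by
      rw [← add_div, div_eq_one_iff_eq hdc.ne']; linarith
    have e1 : (d - a)/(d - c) * f c + (d - b)/(d - c) * f c = f c := by
      rw [← add_mul, hw, one_mul]
    have e2 : (a - c)/(d - c) * f d + (b - c)/(d - c) * f d = f d := by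
      rw [← add_mul, hw2, one_mul]
    linarith
end auxconv

/-- Key extremal lemma: for a convex `f` on `[0,∞)` with `f 0 = 0`, and masses
`p w ∈ (0, t]` with total `s ≥ t`, we have `∑ f (p w) ≤ f t + f (s - t)`. -/
lemma claimA {W : Type*} {f : ℝ → ℝ} (hconv : ConvexOn ℝ (Set.Ici (0:ℝ)) f) (hf0 : f 0 = 0)
    {t : ℝ} (ht : 0 < t) (S : Finset W) :
    ∀ (p : W → ℝ), (∀ w ∈ S, 0 < p w) → (∀ w ∈ S, p w ≤ t) →
      t ≤ ∑ w ∈ S, p w → ∑ w ∈ S, f (p w) ≤ f t + f ((∑ w ∈ S, p w) - t) := by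
  classical
  induction S using Finset.strongInductionOn with
  | _ S ih =>
    intro p hpos hle hts
    have hSne : S.Nonempty := by
      rcases S.eq_empty_or_nonempty with h|h
      · exfalso; rw [h] at hts; simp at hts; linarith
      · exact h
    obtain ⟨w0, hw0⟩ := hSne
    set R := S.erase w0 with hR
    have hbu : (∑ w ∈ R, p w) + p w0 = ∑ w ∈ S, p w := Finset.sum_erase_add S p hw0
    have hbuf : (∑ w ∈ R, f (p w)) + f (p w0) = ∑ w ∈ S, f (p w) :=
      Finset.sum_erase_add S (fun w => f (p w)) hw0
    have hRsub : R ⊂ S := Finset.erase_ssubset hw0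
    have hb : 0 < p w0 := hpos w0 hw0
    have hbt : p w0 ≤ t := hle w0 hw0
    have hRpos : ∀ w ∈ R, 0 < p w := fun w hw => hpos w (Finset.mem_of_mem_erase hw)
    have hRle : ∀ w ∈ R, p w ≤ t := fun w hw => hle w (Finset.mem_of_mem_erase hw)
    have hunn : 0 ≤ ∑ w ∈ R, p w := Finset.sum_nonneg (fun w hw => (hRpos w hw).le)
    rcases le_or_gt t (∑ w ∈ R, p w) with hcase|hcase
    · -- recurse on R
      have h1 := ih R hRsub p hRpos hRle hcase
      have h2 : f (p w0) + f ((∑ w ∈ R, p w) - t) ≤ f (p w0 + ((∑ w ∈ R, p w) - t)) :=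
        superadd_pair hconv hf0 hb.le (by linarith)
      have harg : p w0 + ((∑ w ∈ R, p w) - t) = (∑ w ∈ S, p w) - t := by
        rw [← hbu]; ring
      rw [harg] at h2
      linarith
    · -- collapse R
      have h1 : ∑ w ∈ R, f (p w) ≤ f (∑ w ∈ R, p w) :=
        superadd_sum hconv hf0 R p (fun w hw => (hRpos w hw).le)
      have h2 : f (p w0) + f (∑ w ∈ R, p w) ≤ f ((∑ w ∈ S, p w) - t) + f t := by
        apply spread_pair hconv (by linarith) (by linarith) hbt (by linarith) hcase.le
        rw [← hbu]; ring
      linarith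


lemma tangent_lower {x p : ℝ} (hx : 0 < x) (hp : 0 < p) (hp1 : p ≤ 1) :
    (1 - x) * x ^ (1/p - 1) ≤ p * (1 - x ^ (1/p)) := by
  set n := 1/p with hn
  have hn1 : 1 ≤ n := one_le_one_div hp hp1
  have hpn : p * n = 1 := by rw [hn]; field_simp
  have hB : 1 + n * (1/x - 1) ≤ (1/x) ^ n := by
    have h0 : (0:ℝ) ≤ 1/x := by positivity
    have h := one_add_mul_self_le_rpow_one_add
      (show (-1:ℝ) ≤ 1/x - 1 by linarith) hn1
    rwa [show (1:ℝ) + (1/x - 1) = 1/x by ring] at h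
  have hxn : 0 < x ^ n := Real.rpow_pos_of_pos hx n
  have hinv : (1/x) ^ n = (x ^ n)⁻¹ := by
    rw [one_div, Real.inv_rpow hx.le]
  have key0 : (1 + n * (1/x - 1)) * x ^ n ≤ 1 := by
    rw [hinv] at hB
    calc (1 + n * (1/x - 1)) * x ^ n ≤ (x ^ n)⁻¹ * x ^ n :=
          mul_le_mul_of_nonneg_right hB hxn.le
      _ = 1 := inv_mul_cancel₀ hxn.ne'
  have e : x ^ (n - 1) * x = x ^ n := by
    rw [← Real.rpow_add_one hx.ne' (n - 1)]; norm_num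
  have e2 : (1/x) * x ^ n = x ^ (n - 1) := by
    rw [Real.rpow_sub hx, Real.rpow_one]; ring
  have key : n * (x ^ (n-1) - x ^ n) ≤ 1 - x ^ n := by nlinarith [key0, e2]
  have key2 := mul_le_mul_of_nonneg_left key hp.le
  calc (1 - x) * x ^ (n - 1) = x ^ (n-1) - x ^ (n-1) * x := by ring
    _ = x ^ (n-1) - x ^ n := by rw [e]
    _ = (p * n) * (x ^ (n-1) - x ^ n) := by rw [hpn]; ring
    _ ≤ p * (1 - x ^ n) := by nlinarith [key2]

lemma tangent_upper {x p : ℝ} (hx : 0 ≤ x) (hp : 0 < p) (hp1 : p ≤ 1) :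
    p * (1 - x ^ (1/p)) ≤ 1 - x := by
  set n := 1/p with hn
  have hn1 : 1 ≤ n := one_le_one_div hp hp1
  have hpn : p * n = 1 := by rw [hn]; field_simp
  have hB : 1 + n * (x - 1) ≤ x ^ n := by
    have h := one_add_mul_self_le_rpow_one_add (show (-1:ℝ) ≤ x - 1 by linarith) hn1
    rwa [show (1:ℝ) + (x - 1) = x by ring] at h
  have h2 : 1 - x ^ n ≤ n * (1 - x) := by nlinarith [hB]
  calc p * (1 - x ^ n) ≤ p * (n * (1 - x)) := mul_le_mul_of_nonneg_left h2 hp.le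
    _ = (p * n) * (1 - x) := by ring
    _ = 1 - x := by rw [hpn]; ring


lemma limit_part :
    Tendsto (fun d : ℝ => (1 - d) ^ (d / (1 - d)) + (1 - d) ^ ((1 - d) / d))
      (𝓝[>] 0) (𝓝 (1 + Real.exp (-1))) := by
  have hbase : Tendsto (fun d : ℝ => 1 - d) (𝓝[>] 0) (𝓝 1) := by
    have c : Continuous (fun d : ℝ => 1 - d) := by continuity
    have : Tendsto (fun d : ℝ => 1 - d) (𝓝 0) (𝓝 (1 - 0)) := c.tendsto 0
    simpa using this.mono_left nhdsWithin_le_nhds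
  have hid : Tendsto (fun d : ℝ => d) (𝓝[>] 0) (𝓝 0) :=
    tendsto_id.mono_left nhdsWithin_le_nhds
  have T1 : Tendsto (fun d : ℝ => (1 - d) ^ (d / (1 - d))) (𝓝[>] 0) (𝓝 1) := by
    have hexp : Tendsto (fun d : ℝ => d / (1 - d)) (𝓝[>] 0) (𝓝 0) := by
      have := hid.div hbase one_ne_zero
      rw [zero_div] at this; exact this
    have := hbase.rpow hexp (Or.inl one_ne_zero)
    simpa using this
  have L : Tendsto (fun d : ℝ => Real.log (1 - d) / d) (𝓝[>] 0) (𝓝 (-1)) := by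
    have hd : HasDerivAt (fun d : ℝ => Real.log (1 - d)) (-1) 0 := by
      have h1 : HasDerivAt (fun d : ℝ => 1 - d) (-1) 0 := by
        simpa using (hasDerivAt_id (0:ℝ)).const_sub 1
      have h2 := h1.log (by norm_num)
      simpa using h2
    have L0 := hasDerivAt_iff_tendsto_slope.1 hd
    have L1 : Tendsto (slope (fun d : ℝ => Real.log (1 - d)) 0) (𝓝[>] 0) (𝓝 (-1)) :=
      L0.mono_left (nhdsWithin_mono 0 (fun y hy => ne_of_gt hy))
    apply L1.congr
    intro d
    simp [slope_def_field]
  have T2 : Tendsto (fun d : ℝ => (1 - d) ^ ((1 - d) / d)) (𝓝[>] 0) (𝓝 (Real.exp (-1))) := by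
    have harg : Tendsto (fun d : ℝ => (1 - d) * (Real.log (1 - d) / d)) (𝓝[>] 0) (𝓝 (-1)) := by
      have := hbase.mul L
      simpa using this
    have hcomp : Tendsto (fun d : ℝ => Real.exp ((1 - d) * (Real.log (1 - d) / d)))
        (𝓝[>] 0) (𝓝 (Real.exp (-1))) := (Real.continuous_exp.tendsto _).comp harg
    apply hcomp.congr'
    filter_upwards [Ioo_mem_nhdsGT_of_mem (show (0:ℝ) ∈ Set.Ico 0 1 by norm_num)] with d hd
    have h1d : 0 < 1 - d := by linarith [hd.2]
    have hdne : d ≠ 0 := ne_of_gt hd.1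
    rw [Real.rpow_def_of_pos h1d]
    congr 1
    field_simp
  have := T1.add T2
  simpa using this

open Classical in
/-- Bounds on `(1 − F_{1,P}(x))/(1 − x)` at `x = 1 − Δ` for `Δ`-regular `P`:
`x^{Δ/(1−Δ)} + x^{(1−Δ)/Δ} ≤ (1 − F_{1,P}(x))/(1 − x) ≤ |supp(P)|`, and as `Δ → 0⁺`
the lower bound `(1−Δ)^{Δ/(1−Δ)} + (1−Δ)^{(1−Δ)/Δ}` tends to `1 + e⁻¹`. -/
theorem survival_ratio_bounds {W : Type*} [Fintype W]
    (Δ : ℝ) (hΔ : Δ ∈ Set.Ioo (0:ℝ) 1)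
    (P : W → ℝ) (hpos : ∀ w, 0 ≤ P w) (hsum : ∑ w, P w = 1)
    (hreg : ∀ w, P w ≤ 1 - Δ) :
    ((1 - Δ) ^ (Δ / (1 - Δ)) + (1 - Δ) ^ ((1 - Δ) / Δ)
        ≤ (1 - ∑ w, P w * (1 - Δ) ^ (1 / P w)) / (1 - (1 - Δ)) ∧
      (1 - ∑ w, P w * (1 - Δ) ^ (1 / P w)) / (1 - (1 - Δ))
        ≤ ((Finset.univ.filter (fun w => P w ≠ 0)).card : ℝ)) ∧
    Tendsto (fun d : ℝ => (1 - d) ^ (d / (1 - d)) + (1 - d) ^ ((1 - d) / d))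
      (𝓝[>] 0) (𝓝 (1 + Real.exp (-1))) := by
  obtain ⟨hΔ0, hΔ1⟩ := hΔ
  have hx : 0 < 1 - Δ := by linarith
  have hΔeq : (1:ℝ) - (1 - Δ) = Δ := by ring
  have hconv := psi_convex hx (by linarith : (1:ℝ) - Δ ≤ 1)
  set T := Finset.univ.filter (fun w => P w ≠ 0) with hT
  have hTpos : ∀ w ∈ T, 0 < P w := by
    intro w hw
    have : P w ≠ 0 := by simpa [hT] using hw
    exact lt_of_le_of_ne (hpos w) (Ne.symm this)
  have hsumT : ∑ w ∈ T, P w = 1 := by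
    rw [← hsum]
    apply Finset.sum_subset (Finset.subset_univ T)
    intro w _ hw
    simpa [hT] using hw
  have hFT : ∑ w, P w * (1 - Δ) ^ (1 / P w) = ∑ w ∈ T, P w * (1 - Δ) ^ (1 / P w) := by
    symm
    apply Finset.sum_subset (Finset.subset_univ T)
    intro w _ hw
    have h0 : P w = 0 := by simpa [hT] using hw
    simp [h0]
  refine ⟨⟨?_, ?_⟩, limit_part⟩
  · -- lower bound
    have hclaim := claimA (f := fun p : ℝ => p * (1 - Δ) ^ (1/p)) hconv (by norm_num) hx T P
      hTpos (fun w _ => hreg w) (by rw [hsumT]; linarith)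
    simp only [hsumT, hΔeq] at hclaim
    have t1 := tangent_lower (x := 1 - Δ) (p := 1 - Δ) hx hx (by linarith)
    have t2 := tangent_lower (x := 1 - Δ) (p := Δ) hx hΔ0 (by linarith)
    have e1 : 1/(1 - Δ) - 1 = Δ/(1 - Δ) := by field_simp; ring
    have e2 : 1/Δ - 1 = (1 - Δ)/Δ := by field_simp
    rw [e1, hΔeq] at t1
    rw [e2, hΔeq] at t2
    rw [hΔeq, le_div_iff₀ hΔ0, hFT]
    nlinarith [hclaim, t1, t2]
  · -- upper bound
    rw [hΔeq, div_le_iff₀ hΔ0, hFT]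
    have hterm : ∀ w ∈ T, P w - P w * (1 - Δ) ^ (1 / P w) ≤ Δ := by
      intro w hw
      have h := tangent_upper (x := 1 - Δ) (p := P w) hx.le (hTpos w hw)
        (le_trans (hreg w) (by linarith))
      nlinarith [h]
    have hsub : 1 - ∑ w ∈ T, P w * (1 - Δ) ^ (1 / P w)
        = ∑ w ∈ T, (P w - P w * (1 - Δ) ^ (1 / P w)) := by
      rw [Finset.sum_sub_distrib, hsumT]
    rw [hsub]
    calc ∑ w ∈ T, (P w - P w * (1 - Δ) ^ (1 / P w)) ≤ ∑ w ∈ T, Δ :=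
          Finset.sum_le_sum hterm
      _ = (T.card : ℝ) * Δ := by rw [Finset.sum_const, nsmul_eq_mul]
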